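/- arXiv:1810.06275 — 6 statements merged into one kernel-verified Lean document; each statement's English description precedes it below -/
import Mathlib

section
/- Let X'_n : [0,1] → ℝ^d be the piecewise-constant trajectory X'_n(t) := n^{-1} S_{⌊nt⌋}. Then, almost surely, sup_{t ∈ [0,1]} ‖X'_n(t) − μ t‖ → 0 as n → ∞ (functional strong law of large numbers, step-trajectory version). -/
open MeasureTheory ProbabilityTheory Filter Set

lemma max_div_tendsto (a : ℕ → ℝ) (ha : ∀ n, 0 ≤ a n)
    (h : Tendsto (fun n : ℕ => a n / n) atTop (nhds 0)) :
    Tendsto (fun n : ℕ =>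
      ((Finset.range (n+1)).sup' ⟨0, by simp⟩ a) / n) atTop (nhds 0) := by
  rw [Metric.tendsto_atTop] at h ⊢
  intro ε hε
  obtain ⟨N, hN⟩ := h (ε/2) (by linarith)
  set C := (Finset.range (N+1)).sup' ⟨0, by simp⟩ a with hC
  obtain ⟨N₂, hN₂⟩ := (Metric.tendsto_atTop.1
    (tendsto_const_div_atTop_nhds_zero_nat C)) (ε/2) (by linarith)
  refine ⟨max (N+1) (N₂+1), fun n hn => ?_⟩
  have hn1 : 1 ≤ n := le_trans (le_trans (by omega) (le_max_left _ _)) hn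
  have hnN2 : N₂ ≤ n := le_trans (le_trans (by omega) (le_max_right _ _)) hn
  have hnpos : (0:ℝ) < n := by exact_mod_cast hn1
  have hCnn : 0 ≤ C := le_trans (ha 0) (Finset.le_sup' a (by simp))
  have hCn : C / n < ε/2 := by
    have := hN₂ n hnN2
    rwa [Real.dist_eq, sub_zero, abs_of_nonneg (by positivity)] at this
  have key : ∀ k ∈ Finset.range (n+1), a k < (ε/2) * n := by
    intro k hk
    rcases le_or_gt k N with hkN | hkN
    · have h1 : a k ≤ C := Finset.le_sup' a (by simp; omega)
      have : C < (ε/2) * n := by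
        rwa [div_lt_iff₀ hnpos] at hCn
      linarith
    · have := hN k (by omega)
      rw [Real.dist_eq, sub_zero,
        abs_of_nonneg (div_nonneg (ha k) (Nat.cast_nonneg k))] at this
      have hkpos : (0:ℝ) < k := by exact_mod_cast (by omega : 0 < k)
      have h1 : a k < (ε/2) * k := by rwa [div_lt_iff₀ hkpos] at this
      have h2 : (ε/2) * k ≤ (ε/2) * n := by
        have : (k:ℝ) ≤ n := by exact_mod_cast Finset.mem_range_succ_iff.1 hk
        nlinarith
      linarith
  have hM : (Finset.range (n+1)).sup' ⟨0, by simp⟩ a < (ε/2) * n :=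
    (Finset.sup'_lt_iff _).2 key
  have hMnn : 0 ≤ (Finset.range (n+1)).sup' ⟨0, by simp⟩ a :=
    le_trans (ha 0) (Finset.le_sup' a (by simp))
  rw [Real.dist_eq, sub_zero, abs_of_nonneg (by positivity)]
  rw [div_lt_iff₀ hnpos]
  nlinarith

/-- **Functional strong law of large numbers, step-trajectory version.**
For an i.i.d. random walk `S` in `ℝ^d` with integrable increments of mean `μv`,
the piecewise-constant trajectories `X'_n(t) = n⁻¹ S_{⌊nt⌋}` converge almost surely,
uniformly on `[0,1]`, to `t ↦ t • μv`. -/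
theorem functional_slln_step {d : ℕ} (hd : 1 ≤ d)
    {Ω : Type*} [MeasureSpace Ω] [IsProbabilityMeasure (ℙ : Measure Ω)]
    (ξ : ℕ → Ω → EuclideanSpace ℝ (Fin d))
    (hmeas : ∀ i, Measurable (ξ i))
    (hindep : iIndepFun (fun i : ℕ => ξ (i + 1)) ℙ)
    (hident : ∀ i : ℕ, IdentDistrib (ξ (i + 1)) (ξ 1) ℙ ℙ)
    (hint : Integrable (ξ 1) ℙ)
    (μv : EuclideanSpace ℝ (Fin d)) (hμ : ∫ ω, ξ 1 ω ∂ℙ = μv)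
    (S : ℕ → Ω → EuclideanSpace ℝ (Fin d))
    (hS : ∀ n ω, S n ω = ∑ i ∈ Finset.Icc 1 n, ξ i ω) :
    ∀ᵐ ω ∂ℙ, Tendsto
      (fun n : ℕ => ⨆ t ∈ Icc (0:ℝ) 1, ‖(n : ℝ)⁻¹ • S ⌊(n : ℝ) * t⌋₊ ω - t • μv‖)
      atTop (nhds 0) := by
  have hpair : Pairwise (Function.onFun (IndepFun · · ℙ) (fun i : ℕ => ξ (i + 1))) :=
    fun i j hij => hindep.indepFun hij
  have hslln := strong_law_ae (fun i => ξ (i+1)) hint hpair hident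
  rw [hμ] at hslln
  filter_upwards [hslln] with ω hω
  -- rewrite partial sums
  have hsum : ∀ n, S n ω = ∑ i ∈ Finset.range n, ξ (i+1) ω := by
    intro n
    rw [hS, ← Finset.Ico_add_one_right_eq_Icc, Finset.sum_Ico_eq_sum_range]
    simp [add_comm]
  set a : ℕ → ℝ := fun n => ‖S n ω - (n:ℝ) • μv‖ with haa
  have ha : ∀ n, 0 ≤ a n := fun n => norm_nonneg _
  have h1 : Tendsto (fun n : ℕ => a n / n) atTop (nhds 0) := by
    have h0 : Tendsto (fun n : ℕ => ‖(n:ℝ)⁻¹ • S n ω - μv‖) atTop (nhds 0) := by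
      have := (tendsto_iff_norm_sub_tendsto_zero).1 hω
      refine this.congr (fun n => ?_)
      rw [hsum]
    refine h0.congr' ?_
    filter_upwards [eventually_ge_atTop 1] with n hn
    have hn0 : (n:ℝ) ≠ 0 := Nat.cast_ne_zero.2 (by omega)
    have : (n:ℝ)⁻¹ • S n ω - μv = (n:ℝ)⁻¹ • (S n ω - (n:ℝ) • μv) := by
      rw [smul_sub, inv_smul_smul₀ hn0]
    rw [this, norm_smul, norm_inv, Real.norm_natCast, haa]
    ring
  have h2 := max_div_tendsto a ha h1
  have h3 : Tendsto (fun n : ℕ =>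
      ((Finset.range (n+1)).sup' ⟨0, by simp⟩ a) / n + ‖μv‖ / n) atTop (nhds 0) := by
    simpa using h2.add (tendsto_const_div_atTop_nhds_zero_nat ‖μv‖)
  refine tendsto_of_tendsto_of_tendsto_of_le_of_le' tendsto_const_nhds h3 ?_ ?_
  · filter_upwards with n
    refine Real.iSup_nonneg (fun t => Real.iSup_nonneg (fun _ => norm_nonneg _))
  · filter_upwards [eventually_ge_atTop 1] with n hn
    set M := (Finset.range (n+1)).sup' ⟨0, by simp⟩ a with hM
    have hnpos : (0:ℝ) < n := by exact_mod_cast hn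
    have hMnn : 0 ≤ M := le_trans (ha 0) (Finset.le_sup' a (by simp))
    have hGnn : 0 ≤ M / n + ‖μv‖ / n := by positivity
    refine Real.iSup_le (fun t => Real.iSup_le (fun ht => ?_) hGnn) hGnn
    obtain ⟨ht0, ht1⟩ := ht
    set k := ⌊(n:ℝ) * t⌋₊ with hk
    have hkn : k ≤ n := by
      have : ((n:ℝ) * t) ≤ (n:ℝ) := by nlinarith
      calc k ≤ ⌊(n:ℝ)⌋₊ := Nat.floor_mono this
        _ = n := Nat.floor_natCast n
    have hkle : (k:ℝ) ≤ (n:ℝ) * t := Nat.floor_le (by positivity)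
    have hklt : (n:ℝ) * t < k + 1 := Nat.lt_floor_add_one _
    have hid : (n:ℝ)⁻¹ • S k ω - t • μv
        = (n:ℝ)⁻¹ • (S k ω - (k:ℝ) • μv) + ((k:ℝ)/n - t) • μv := by
      rw [smul_sub, smul_smul, sub_smul, div_eq_inv_mul]
      abel
    rw [hid]
    have hb1 : ‖(n:ℝ)⁻¹ • (S k ω - (k:ℝ) • μv)‖ ≤ M / n := by
      rw [norm_smul, norm_inv, Real.norm_natCast]
      rw [div_eq_inv_mul]
      exact mul_le_mul_of_nonneg_left
        (Finset.le_sup' a (Finset.mem_range_succ_iff.2 hkn)) (inv_nonneg.2 hnpos.le)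
    have hb2 : ‖((k:ℝ)/n - t) • μv‖ ≤ ‖μv‖ / n := by
      rw [norm_smul, Real.norm_eq_abs]
      have habs : |(k:ℝ)/n - t| ≤ 1/n := by
        have he : (k:ℝ)/n - t = ((k:ℝ) - n*t)/n := by field_simp
        rw [he, abs_div, abs_of_pos hnpos]
        gcongr
        exact abs_le.2 ⟨by linarith, by linarith⟩
      calc |(k:ℝ)/n - t| * ‖μv‖ ≤ (1/n) * ‖μv‖ := by
            gcongr
        _ = ‖μv‖ / n := by ring
    calc ‖_ + _‖ ≤ ‖(n:ℝ)⁻¹ • (S k ω - (k:ℝ) • μv)‖ + ‖((k:ℝ)/n - t) • μv‖ :=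
          norm_add_le _ _
      _ ≤ M / n + ‖μv‖ / n := add_le_add hb1 hb2
end

section
/- Almost surely, the Hausdorff distance ρ_H( n^{-1}{S₀, S₁, …, S_n} , [0, μ] ) → 0 as n → ∞, where n^{-1}{S₀, …, S_n} = { S_k / n : 0 ≤ k ≤ n } and [0, μ] = { t μ : t ∈ [0,1] } is the line segment from the origin to μ. -/
open MeasureTheory ProbabilityTheory Filter Set Metric

lemma det_hausdorff {E : Type*} [NormedAddCommGroup E] [NormedSpace ℝ E]
    (a : ℕ → E) (ha0 : a 0 = 0) (μ : E)
    (hb : Tendsto (fun n : ℕ => (n : ℝ)⁻¹ • a n) atTop (nhds μ)) :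
    Tendsto (fun n : ℕ => hausdorffDist ((fun k : ℕ => (n : ℝ)⁻¹ • a k) '' Iic n)
      (segment ℝ (0 : E) μ)) atTop (nhds 0) := by
  rw [Metric.tendsto_atTop]
  intro ε hε
  set ε' : ℝ := ε / 4 with hε'
  have hε'pos : 0 < ε' := by positivity
  -- pick K such that for k ≥ K, the average is ε'-close to μ
  obtain ⟨K0, hK0⟩ := (Metric.tendsto_atTop.mp hb) ε' hε'pos
  set K : ℕ := max K0 1 with hK
  have hK1 : 1 ≤ K := le_max_right _ _
  have hKclose : ∀ k : ℕ, K ≤ k → dist ((k : ℝ)⁻¹ • a k) μ ≤ ε' :=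
    fun k hk => (hK0 k (le_trans (le_max_left _ _) hk)).le
  -- bound on the finitely many initial terms
  set M : ℝ := ∑ k ∈ Finset.range K, ‖a k‖ with hM
  have hMk : ∀ k < K, ‖a k‖ ≤ M := by
    intro k hk
    exact Finset.single_le_sum (f := fun k => ‖a k‖) (fun i _ => norm_nonneg _)
      (Finset.mem_range.mpr hk)
  -- eventual smallness conditions
  have hinv := tendsto_inv_atTop_nhds_zero_nat (𝕜 := ℝ)
  have e1 : ∀ᶠ n : ℕ in atTop, M * (n : ℝ)⁻¹ < ε' := by
    have := hinv.const_mul M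
    rw [mul_zero] at this
    exact this.eventually_lt_const hε'pos
  have e2 : ∀ᶠ n : ℕ in atTop, ‖μ‖ * (n : ℝ)⁻¹ < ε' := by
    have := hinv.const_mul ‖μ‖
    rw [mul_zero] at this
    exact this.eventually_lt_const hε'pos
  have e3 : ∀ᶠ n : ℕ in atTop, (K : ℝ) * ‖μ‖ * (n : ℝ)⁻¹ < ε' := by
    have := hinv.const_mul ((K : ℝ) * ‖μ‖)
    rw [mul_zero] at this
    exact this.eventually_lt_const hε'pos
  have e4 : ∀ᶠ n : ℕ in atTop, 1 ≤ n := eventually_ge_atTop 1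
  obtain ⟨N, hN⟩ := eventually_atTop.mp (e1.and (e2.and (e3.and e4)))
  refine ⟨N, fun n hn => ?_⟩
  obtain ⟨hn1, hn2, hn3, hn4⟩ := hN n hn
  have hnpos : (0 : ℝ) < n := by exact_mod_cast hn4
  -- key estimate: for K ≤ k ≤ n, the rescaled point is close to (k/n) • μ
  have key : ∀ k : ℕ, K ≤ k → k ≤ n →
      dist ((n : ℝ)⁻¹ • a k) (((k : ℝ) / n) • μ) ≤ ε' := by
    intro k hKk hkn
    have hkpos : (0 : ℝ) < k := by
      exact_mod_cast lt_of_lt_of_le Nat.zero_lt_one (le_trans hK1 hKk)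
    have hrw : (n : ℝ)⁻¹ • a k = ((k : ℝ) / n) • ((k : ℝ)⁻¹ • a k) := by
      rw [smul_smul, div_mul_eq_mul_div, mul_inv_cancel₀ (ne_of_gt hkpos),
        one_div]
    rw [hrw, dist_smul₀]
    have h1 : ‖(k : ℝ) / n‖ ≤ 1 := by
      rw [Real.norm_eq_abs, abs_of_nonneg (by positivity)]
      exact div_le_one_of_le₀ (by exact_mod_cast hkn) (le_of_lt hnpos)
    calc ‖(k : ℝ) / n‖ * dist ((k : ℝ)⁻¹ • a k) μ
        ≤ 1 * ε' := mul_le_mul h1 (hKclose k hKk) dist_nonneg zero_le_one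
      _ = ε' := one_mul _
  -- small-index estimate
  have small : ∀ k : ℕ, k < K → dist ((n : ℝ)⁻¹ • a k) (0 : E) ≤ ε' := by
    intro k hk
    rw [dist_zero_right, norm_smul, norm_inv, Real.norm_natCast]
    calc (n : ℝ)⁻¹ * ‖a k‖ ≤ (n : ℝ)⁻¹ * M := by
          have := hMk k hk
          gcongr
      _ = M * (n : ℝ)⁻¹ := mul_comm _ _
      _ ≤ ε' := hn1.le
  have hmem_seg : ∀ t : ℝ, 0 ≤ t → t ≤ 1 → t • μ ∈ segment ℝ (0 : E) μ := by
    intro t ht0 ht1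
    rw [segment_eq_image ℝ (0 : E) μ]
    exact ⟨t, ⟨ht0, ht1⟩, by simp⟩
  have hbound : hausdorffDist ((fun k : ℕ => (n : ℝ)⁻¹ • a k) '' Iic n)
      (segment ℝ (0 : E) μ) ≤ 2 * ε' := by
    apply hausdorffDist_le_of_mem_dist (by positivity)
    · rintro x ⟨k, hk, rfl⟩
      simp only [Set.mem_Iic] at hk
      rcases lt_or_ge k K with hkK | hkK
      · exact ⟨0, left_mem_segment ℝ 0 μ,
          le_trans (small k hkK) (by linarith)⟩
      · refine ⟨((k : ℝ) / n) • μ, hmem_seg _ (by positivity)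
          (div_le_one_of_le₀ (by exact_mod_cast hk) (le_of_lt hnpos)), ?_⟩
        exact le_trans (key k hkK hk) (by linarith)
    · intro y hy
      rw [segment_eq_image ℝ (0 : E) μ] at hy
      obtain ⟨t, ⟨ht0, ht1⟩, rfl⟩ := hy
      simp only [smul_zero, zero_add]
      set k : ℕ := ⌊t * n⌋₊ with hkdef
      have hkn : k ≤ n := by
        have : t * n ≤ (n : ℝ) := by nlinarith
        calc k ≤ ⌊(n : ℝ)⌋₊ := Nat.floor_le_floor this
          _ = n := Nat.floor_natCast n
      refine ⟨(n : ℝ)⁻¹ • a k, ⟨k, Set.mem_Iic.mpr hkn, rfl⟩, ?_⟩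
      have hfl : (k : ℝ) ≤ t * n := Nat.floor_le (by positivity)
      have hfu : t * n < (k : ℝ) + 1 := Nat.lt_floor_add_one _
      have hclose : dist (((k : ℝ) / n) • μ) (t • μ) ≤ ε' := by
        rw [dist_eq_norm, ← sub_smul, norm_smul]
        have habs : ‖(k : ℝ) / n - t‖ ≤ (n : ℝ)⁻¹ := by
          rw [Real.norm_eq_abs, abs_le]
          constructor
          · rw [neg_le, neg_sub]
            calc t - (k : ℝ) / n ≤ ((k : ℝ) + 1) / n - (k : ℝ) / n := by
                  have : t ≤ ((k : ℝ) + 1) / n := by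
                    rw [le_div_iff₀ hnpos]; linarith
                  linarith
            _ = (n : ℝ)⁻¹ := by field_simp; ring
          · have : (k : ℝ) / n ≤ t := by
              rw [div_le_iff₀ hnpos]; linarith
            have hninv : (0 : ℝ) ≤ (n : ℝ)⁻¹ := by positivity
            linarith
        calc ‖(k : ℝ) / n - t‖ * ‖μ‖ ≤ (n : ℝ)⁻¹ * ‖μ‖ :=
              mul_le_mul_of_nonneg_right habs (norm_nonneg μ)
          _ = ‖μ‖ * (n : ℝ)⁻¹ := mul_comm _ _
          _ ≤ ε' := hn2.le
      rw [dist_comm]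
      rcases lt_or_ge k K with hkK | hkK
      · have h0 : dist ((n : ℝ)⁻¹ • a k) (0 : E) ≤ ε' := small k hkK
        have ht : dist (0 : E) (t • μ) ≤ ε' := by
          rw [dist_comm, dist_zero_right, norm_smul, Real.norm_eq_abs,
            abs_of_nonneg ht0]
          have htK : t ≤ (K : ℝ) / n := by
            rw [le_div_iff₀ hnpos]
            have : (k : ℝ) + 1 ≤ (K : ℝ) := by exact_mod_cast hkK
            linarith
          calc t * ‖μ‖ ≤ ((K : ℝ) / n) * ‖μ‖ :=
                mul_le_mul_of_nonneg_right htK (norm_nonneg _)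
            _ = (K : ℝ) * ‖μ‖ * (n : ℝ)⁻¹ := by ring
            _ ≤ ε' := hn3.le
        calc dist ((n : ℝ)⁻¹ • a k) (t • μ)
            ≤ dist ((n : ℝ)⁻¹ • a k) (0 : E) + dist (0 : E) (t • μ) :=
              dist_triangle _ _ _
          _ ≤ 2 * ε' := by linarith
      · calc dist ((n : ℝ)⁻¹ • a k) (t • μ)
            ≤ dist ((n : ℝ)⁻¹ • a k) (((k : ℝ) / n) • μ)
              + dist (((k : ℝ) / n) • μ) (t • μ) := dist_triangle _ _ _
          _ ≤ 2 * ε' := by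
              have := key k hkK hkn
              linarith
  rw [Real.dist_eq, sub_zero, abs_of_nonneg hausdorffDist_nonneg]
  calc hausdorffDist _ _ ≤ 2 * ε' := hbound
    _ < ε := by rw [hε']; linarith

/-- **Set law of large numbers for random walk points.** Almost surely, the rescaled
point set `n⁻¹{S₀, S₁, …, S_n}` converges in Hausdorff distance to the segment
`[0, μ] = {tμ : t ∈ [0,1]}`. -/
theorem rw_points_hausdorff_slln {d : ℕ} (hd : 1 ≤ d)
    {Ω : Type*} [MeasureSpace Ω] [IsProbabilityMeasure (ℙ : Measure Ω)]
    (ξ : ℕ → Ω → EuclideanSpace ℝ (Fin d))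
    (hmeas : ∀ i, Measurable (ξ i))
    (hindep : iIndepFun (fun i : ℕ => ξ (i + 1)) ℙ)
    (hident : ∀ i : ℕ, IdentDistrib (ξ (i + 1)) (ξ 1) ℙ ℙ)
    (hint : Integrable (ξ 1) ℙ)
    (μv : EuclideanSpace ℝ (Fin d)) (hμ : ∫ ω, ξ 1 ω ∂ℙ = μv)
    (S : ℕ → Ω → EuclideanSpace ℝ (Fin d))
    (hS : ∀ n ω, S n ω = ∑ i ∈ Finset.Icc 1 n, ξ i ω) :
    ∀ᵐ ω ∂ℙ, Tendsto
      (fun n : ℕ => hausdorffDist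
        ((fun k : ℕ => (n : ℝ)⁻¹ • S k ω) '' Iic n)
        (segment ℝ (0 : EuclideanSpace ℝ (Fin d)) μv))
      atTop (nhds 0) := by
  have hpair : Pairwise (Function.onFun (IndepFun · · ℙ) (fun i : ℕ => ξ (i + 1))) :=
    fun i j hij => hindep.indepFun hij
  have hslln := strong_law_ae (fun i : ℕ => ξ (i + 1)) hint hpair hident
  filter_upwards [hslln] with ω hω
  have hsum : ∀ n : ℕ, ∑ i ∈ Finset.range n, ξ (i + 1) ω = S n ω := by
    intro n
    rw [hS n ω, ← Finset.Ico_add_one_right_eq_Icc, Finset.sum_Ico_eq_sum_range]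
    simp [add_comm]
  have hten : Tendsto (fun n : ℕ => (n : ℝ)⁻¹ • S n ω) atTop (nhds μv) := by
    rw [← hμ]
    refine hω.congr fun n => ?_
    rw [hsum n]
  have hS0 : S 0 ω = 0 := by simp [hS 0 ω]
  exact det_hausdorff (fun k => S k ω) hS0 μv hten
end

section
/- Let D_n := diam {S₀, S₁, …, S_n} = max_{0 ≤ i, j ≤ n} ‖S_i − S_j‖ be the diameter of the first n steps of the walk. Then, almost surely, n^{-1} D_n → ‖μ‖ as n → ∞. -/
open MeasureTheory ProbabilityTheory Filter Set Metric

open Topology in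

lemma aux_det {E : Type*} [NormedAddCommGroup E] [NormedSpace ℝ E]
    (f : ℕ → E) (hf0 : f 0 = 0) (μ : E)
    (h : Tendsto (fun n : ℕ => (n : ℝ)⁻¹ • f n) atTop (𝓝 μ)) :
    Tendsto (fun n : ℕ => (n : ℝ)⁻¹ * diam (f '' Set.Iic n)) atTop (𝓝 ‖μ‖) := by
  rw [Metric.tendsto_atTop] at h ⊢
  intro ε hε
  obtain ⟨N₁, hN₁⟩ := h (ε / 4) (by linarith)
  set g : ℕ → ℝ := fun k => ‖f k - (k : ℝ) • μ‖ with hg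
  have hgk : ∀ k ≥ max N₁ 1, g k ≤ ε / 4 * k := by
    intro k hk
    have hk1 : (1 : ℕ) ≤ k := le_trans (le_max_right _ _) hk
    have hkpos : (0 : ℝ) < k := by exact_mod_cast hk1
    have := hN₁ k (le_trans (le_max_left _ _) hk)
    rw [dist_eq_norm] at this
    have : (k : ℝ) * ‖(k : ℝ)⁻¹ • f k - μ‖ ≤ (k : ℝ) * (ε / 4) := by
      apply mul_le_mul_of_nonneg_left this.le hkpos.le
    calc g k = ‖(k : ℝ) • ((k : ℝ)⁻¹ • f k - μ)‖ := by
            rw [smul_sub, smul_inv_smul₀ hkpos.ne']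
      _ = (k : ℝ) * ‖(k : ℝ)⁻¹ • f k - μ‖ := by
            rw [norm_smul, Real.norm_natCast]
      _ ≤ (k : ℝ) * (ε / 4) := this
      _ = ε / 4 * k := by ring
  set N := max N₁ 1
  set C : ℝ := ∑ k ∈ Finset.range N, g k with hC
  have hC0 : 0 ≤ C := Finset.sum_nonneg fun k _ => norm_nonneg _
  have hgC : ∀ i n : ℕ, i ≤ n → g i ≤ C + ε / 4 * n := by
    intro i n hin
    rcases lt_or_ge i N with hi | hi
    · have : g i ≤ C := Finset.single_le_sum (f := g) (fun k _ => norm_nonneg _)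
        (Finset.mem_range.2 hi)
      nlinarith [hε.le, Nat.cast_nonneg (α := ℝ) n]
    · have := hgk i hi
      have hin' : (i : ℝ) ≤ n := by exact_mod_cast hin
      nlinarith
  -- choose N₂ for the C/n terms
  obtain ⟨N₂, hN₂⟩ : ∃ N₂ : ℕ, ∀ n ≥ N₂, C ≤ ε / 8 * n ∧ 1 ≤ n := by
    obtain ⟨m, hm⟩ := exists_nat_ge (8 * C / ε)
    refine ⟨max m 1, fun n hn => ⟨?_, le_trans (le_max_right _ _) hn⟩⟩
    have : (m : ℝ) ≤ n := by exact_mod_cast le_trans (le_max_left _ _) hn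
    have : 8 * C / ε ≤ n := le_trans hm this
    rw [div_le_iff₀ hε] at this
    nlinarith
  refine ⟨max N N₂, fun n hn => ?_⟩
  have hnN : N ≤ n := le_trans (le_max_left _ _) hn
  have hnN₂ := hN₂ n (le_trans (le_max_right _ _) hn)
  have hn1 : (1:ℕ) ≤ n := hnN₂.2
  have hnpos : (0 : ℝ) < n := by exact_mod_cast hn1
  have hbdd : Bornology.IsBounded (f '' Set.Iic n) :=
    ((Set.finite_Iic n).image f).isBounded
  -- upper bound on diam
  have hub : diam (f '' Set.Iic n) ≤ n * ‖μ‖ + 2 * C + ε / 2 * n := by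
    apply diam_le_of_forall_dist_le
    · positivity
    · rintro x ⟨i, hi, rfl⟩ y ⟨j, hj, rfl⟩
      have hi' : i ≤ n := hi
      have hj' : j ≤ n := hj
      have h1 : dist (f i) (f j) ≤ g i + g j + ‖(i : ℝ) • μ - (j : ℝ) • μ‖ := by
        rw [dist_eq_norm]
        calc ‖f i - f j‖ = ‖(f i - (i:ℝ) • μ) - (f j - (j:ℝ) • μ) + ((i:ℝ) • μ - (j:ℝ) • μ)‖ := by
              congr 1; abel
          _ ≤ ‖(f i - (i:ℝ) • μ) - (f j - (j:ℝ) • μ)‖ + ‖(i:ℝ) • μ - (j:ℝ) • μ‖ := norm_add_le _ _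
          _ ≤ g i + g j + ‖(i:ℝ) • μ - (j:ℝ) • μ‖ := by
              have := norm_sub_le (f i - (i:ℝ) • μ) (f j - (j:ℝ) • μ); linarith
      have h2 : ‖(i : ℝ) • μ - (j : ℝ) • μ‖ ≤ n * ‖μ‖ := by
        rw [← sub_smul, norm_smul, Real.norm_eq_abs]
        have : |(i : ℝ) - j| ≤ n := by
          rw [abs_sub_le_iff]
          constructor <;> [skip; skip] <;>
          · have hi'' : (i : ℝ) ≤ n := by exact_mod_cast hi'
            have hj'' : (j : ℝ) ≤ n := by exact_mod_cast hj'
            have : (0:ℝ) ≤ i := Nat.cast_nonneg i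
            have : (0:ℝ) ≤ j := Nat.cast_nonneg j
            linarith
        exact mul_le_mul_of_nonneg_right this (norm_nonneg _)
      have h3 := hgC i n hi'
      have h4 := hgC j n hj'
      linarith
  -- lower bound on diam
  have hlb : (n : ℝ) * ‖μ‖ - (C + ε / 4 * n) ≤ diam (f '' Set.Iic n) := by
    have hmem : f n ∈ f '' Set.Iic n := ⟨n, le_refl n, rfl⟩
    have hmem0 : f 0 ∈ f '' Set.Iic n := ⟨0, Nat.zero_le n, rfl⟩
    have := dist_le_diam_of_mem hbdd hmem hmem0
    rw [dist_eq_norm, hf0, sub_zero] at this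
    have h5 : (n : ℝ) * ‖μ‖ - g n ≤ ‖f n‖ := by
      have : ‖(n : ℝ) • μ‖ - ‖f n - (n : ℝ) • μ‖ ≤ ‖f n‖ := by
        have := norm_sub_norm_le (f n) ((n : ℝ) • μ)
        have h6 := norm_sub_le ((n:ℝ) • μ) (f n)
        rw [norm_sub_rev] at this
        calc ‖(n : ℝ) • μ‖ - ‖f n - (n : ℝ) • μ‖
            ≤ ‖(n : ℝ) • μ‖ - (‖(n:ℝ) • μ‖ - ‖f n‖) := by
              have := norm_sub_norm_le ((n:ℝ) • μ) (f n); rw [norm_sub_rev] at this; linarith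
          _ = ‖f n‖ := by ring
      rw [norm_smul, Real.norm_natCast] at this
      exact this
    have h7 := hgC n n (le_refl n)
    linarith
  rw [Real.dist_eq, abs_sub_lt_iff]
  have hdnn : 0 ≤ diam (f '' Set.Iic n) := diam_nonneg
  constructor
  · have : (n : ℝ)⁻¹ * diam (f '' Set.Iic n) ≤ (n:ℝ)⁻¹ * (n * ‖μ‖ + 2 * C + ε / 2 * n) := by
      apply mul_le_mul_of_nonneg_left hub (by positivity)
    have heq : (n:ℝ)⁻¹ * (n * ‖μ‖ + 2 * C + ε / 2 * n) = ‖μ‖ + 2 * C / n + ε / 2 := by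
      field_simp
    have hCn : 2 * C / n ≤ ε / 4 := by
      rw [div_le_iff₀ hnpos]
      nlinarith [hnN₂.1]
    nlinarith
  · have : (n:ℝ)⁻¹ * ((n : ℝ) * ‖μ‖ - (C + ε / 4 * n)) ≤ (n : ℝ)⁻¹ * diam (f '' Set.Iic n) := by
      apply mul_le_mul_of_nonneg_left hlb (by positivity)
    have heq : (n:ℝ)⁻¹ * ((n : ℝ) * ‖μ‖ - (C + ε / 4 * n)) = ‖μ‖ - C / n - ε / 4 := by
      field_simp; ring
    have hCn : C / n ≤ ε / 8 := by
      rw [div_le_iff₀ hnpos]; nlinarith [hnN₂.1]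
    nlinarith

/-- **LLN for the diameter of the random walk.** With `D_n = diam{S₀, …, S_n}`, almost
surely `n⁻¹ D_n → ‖μ‖`. -/
theorem rw_diameter_slln {d : ℕ} (hd : 1 ≤ d)
    {Ω : Type*} [MeasureSpace Ω] [IsProbabilityMeasure (ℙ : Measure Ω)]
    (ξ : ℕ → Ω → EuclideanSpace ℝ (Fin d))
    (hmeas : ∀ i, Measurable (ξ i))
    (hindep : iIndepFun (fun i : ℕ => ξ (i + 1)) ℙ)
    (hident : ∀ i : ℕ, IdentDistrib (ξ (i + 1)) (ξ 1) ℙ ℙ)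
    (hint : Integrable (ξ 1) ℙ)
    (μv : EuclideanSpace ℝ (Fin d)) (hμ : ∫ ω, ξ 1 ω ∂ℙ = μv)
    (S : ℕ → Ω → EuclideanSpace ℝ (Fin d))
    (hS : ∀ n ω, S n ω = ∑ i ∈ Finset.Icc 1 n, ξ i ω) :
    ∀ᵐ ω ∂ℙ, Tendsto
      (fun n : ℕ => (n : ℝ)⁻¹ * diam ((fun k : ℕ => S k ω) '' Iic n))
      atTop (nhds ‖μv‖) := by
  have hslln := strong_law_ae (μ := (ℙ : Measure Ω)) (fun i => ξ (i + 1))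
    (by simpa using hint)
    (fun i j hij => hindep.indepFun hij)
    (fun i => (hident i).trans (hident 0).symm)
  filter_upwards [hslln] with ω hω
  have hSsum : ∀ n, S n ω = ∑ i ∈ Finset.range n, ξ (i + 1) ω := by
    intro n
    rw [hS, ← Finset.Ico_add_one_right_eq_Icc, Finset.sum_Ico_eq_sum_range]
    simp [add_comm]
  have hμ0 : (∫ ω, ξ (0 + 1) ω ∂ℙ) = μv := by simpa using hμ
  have h : Tendsto (fun n : ℕ => (n : ℝ)⁻¹ • S n ω) atTop (nhds μv) := by
    rw [← hμ0]
    exact hω.congr (fun n => by rw [hSsum])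
  exact aux_det (fun k => S k ω) (by simp [hS]) μv h
end

section
/- Almost surely, the Hausdorff distance ρ_H( n^{-1} conv{S₀, S₁, …, S_n} , [0, μ] ) → 0 as n → ∞, where conv denotes the convex hull in ℝ^d and [0, μ] = { t μ : t ∈ [0,1] } is the line segment from the origin to μ. -/
open MeasureTheory ProbabilityTheory Filter Set Metric Topology

private lemma infDist_le_of_mem_cthickening {E : Type*} [PseudoMetricSpace E]
    {δ : ℝ} (hδ : 0 ≤ δ) {s : Set E} {x : E} (hx : x ∈ cthickening δ s) :
    infDist x s ≤ δ := by
  rw [mem_cthickening_iff] at hx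
  exact ENNReal.toReal_le_of_le_ofReal hδ hx

private lemma det_lemma {E : Type*} [NormedAddCommGroup E] [NormedSpace ℝ E]
    (a : ℕ → E) (h0 : a 0 = 0) (μ : E)
    (hL : Tendsto (fun n : ℕ => (n : ℝ)⁻¹ • a n) atTop (𝓝 μ)) :
    Tendsto (fun n : ℕ => hausdorffDist
        (convexHull ℝ ((fun k : ℕ => (n : ℝ)⁻¹ • a k) '' Iic n))
        (segment ℝ (0 : E) μ)) atTop (𝓝 0) := by
  rw [Metric.tendsto_nhds]
  intro ε hε
  set δ := ε / 4 with hδdef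
  have δpos : 0 < δ := by positivity
  obtain ⟨N₀, hN₀⟩ : ∃ N₀ : ℕ, ∀ k ≥ N₀, dist ((k : ℝ)⁻¹ • a k) μ < δ :=
    (Metric.tendsto_atTop.1 hL δ δpos)
  set N := max N₀ 1 with hNdef
  have hN1 : 1 ≤ N := le_max_right _ _
  have hN : ∀ k ≥ N, ‖(k : ℝ)⁻¹ • a k - μ‖ ≤ δ := by
    intro k hk
    rw [← dist_eq_norm]
    exact (hN₀ k (le_trans (le_max_left _ _) hk)).le
  set C : ℝ := ∑ k ∈ Finset.range (N + 1), ‖a k‖ with hCdef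
  have hC : ∀ k ≤ N, ‖a k‖ ≤ C := by
    intro k hk
    exact Finset.single_le_sum (f := fun k => ‖a k‖) (fun i _ => norm_nonneg _)
      (Finset.mem_range.2 (Nat.lt_succ_of_le hk))
  have evC : ∀ᶠ n : ℕ in atTop, C / n < δ :=
    (tendsto_const_div_atTop_nhds_zero_nat C).eventually_lt_const δpos
  have evNμ : ∀ᶠ n : ℕ in atTop, (N : ℝ) * ‖μ‖ / n < δ :=
    (tendsto_const_div_atTop_nhds_zero_nat ((N : ℝ) * ‖μ‖)).eventually_lt_const δpos
  have evμ : ∀ᶠ n : ℕ in atTop, ‖μ‖ / n < δ :=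
    (tendsto_const_div_atTop_nhds_zero_nat ‖μ‖).eventually_lt_const δpos
  filter_upwards [eventually_ge_atTop N, evC, evNμ, evμ] with n hnN hC1 hC2 hC3
  have hn1 : 1 ≤ n := le_trans hN1 hnN
  have hnpos : (0 : ℝ) < n := by exact_mod_cast hn1
  -- the two sets
  set A : Set E := (fun k : ℕ => (n : ℝ)⁻¹ • a k) '' Iic n with hAdef
  set seg : Set E := segment ℝ (0 : E) μ with hsegdef
  have hzA : (0 : E) ∈ A := ⟨0, by simp, by simp [h0]⟩
  have hsegmem : ∀ t : ℝ, 0 ≤ t → t ≤ 1 → t • μ ∈ seg := by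
    intro t ht0 ht1
    exact ⟨1 - t, t, by linarith, ht0, by ring, by simp⟩
  -- key estimate: for N ≤ k ≤ n, the point (n⁻¹ • a k) is δ-close to (k/n) • μ
  have hkey : ∀ k : ℕ, N ≤ k → k ≤ n →
      dist ((n : ℝ)⁻¹ • a k) (((k : ℝ) / n) • μ) ≤ δ := by
    intro k hkN hkn
    have hk1 : 1 ≤ k := le_trans hN1 hkN
    have hkpos : (0 : ℝ) < k := by exact_mod_cast hk1
    have heq : (n : ℝ)⁻¹ • a k - ((k : ℝ) / n) • μ
        = ((k : ℝ) / n) • ((k : ℝ)⁻¹ • a k - μ) := by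
      rw [smul_sub, smul_smul]
      congr 2
      field_simp
    rw [dist_eq_norm, heq, norm_smul, Real.norm_eq_abs,
      abs_of_nonneg (by positivity)]
    have h1 : (k : ℝ) / n ≤ 1 := by
      rw [div_le_one hnpos]; exact_mod_cast hkn
    calc (k : ℝ) / n * ‖(k : ℝ)⁻¹ • a k - μ‖ ≤ 1 * δ := by
          exact mul_le_mul h1 (hN k hkN) (norm_nonneg _) zero_le_one
      _ = δ := one_mul δ
  -- Direction 1
  have dir1 : ∀ x ∈ convexHull ℝ A, infDist x seg ≤ 2 * δ := by
    have hsub : A ⊆ cthickening (2 * δ) seg := by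
      rintro x ⟨k, hk, rfl⟩
      simp only [mem_Iic] at hk
      rcases lt_or_ge k N with hkN | hkN
      · refine mem_cthickening_of_dist_le _ (0 : E) _ _ (left_mem_segment ℝ (0 : E) μ) ?_
        rw [dist_zero_right, norm_smul, norm_inv, Real.norm_natCast]
        calc (n : ℝ)⁻¹ * ‖a k‖ = ‖a k‖ / n := by ring
          _ ≤ C / n := by gcongr; exact hC k hkN.le
          _ ≤ 2 * δ := le_trans hC1.le (by linarith)
      · refine mem_cthickening_of_dist_le _ (((k : ℝ) / n) • μ) _ _
          (hsegmem _ (by positivity) (by rw [div_le_one hnpos]; exact_mod_cast hk)) ?_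
        exact le_trans (hkey k hkN hk) (by linarith)
    have hconv : convexHull ℝ A ⊆ cthickening (2 * δ) seg :=
      convexHull_min hsub ((convex_segment _ _).cthickening _)
    intro x hx
    exact infDist_le_of_mem_cthickening (by positivity) (hconv hx)
  -- Direction 2
  have dir2 : ∀ y ∈ seg, infDist y (convexHull ℝ A) ≤ 2 * δ := by
    rintro y hy
    obtain ⟨s, t, hs, ht, hst, rfl⟩ := hy
    have hy' : s • (0 : E) + t • μ = t • μ := by simp
    rw [hy']
    have ht1 : t ≤ 1 := by linarith
    rcases le_or_gt (t * n) N with hcase | hcase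
    · -- close to 0
      refine le_trans (infDist_le_dist_of_mem (subset_convexHull ℝ A hzA)) ?_
      · rw [dist_eq_norm, sub_zero, norm_smul, Real.norm_eq_abs, abs_of_nonneg ht]
        have : t ≤ (N : ℝ) / n := by
          rw [le_div_iff₀ hnpos]; exact hcase
        calc t * ‖μ‖ ≤ (N : ℝ) / n * ‖μ‖ :=
              mul_le_mul_of_nonneg_right this (norm_nonneg _)
          _ = (N : ℝ) * ‖μ‖ / n := by ring
          _ ≤ 2 * δ := le_trans hC2.le (by linarith)
    · -- use floor point
      set k := ⌊t * n⌋₊ with hkdef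
      have htn0 : 0 ≤ t * n := by positivity
      have hkle : (k : ℝ) ≤ t * n := Nat.floor_le htn0
      have hklt : t * n < k + 1 := Nat.lt_floor_add_one _
      have hkN : N ≤ k := Nat.le_floor hcase.le
      have hkn : k ≤ n := by
        have : t * n ≤ n := by nlinarith
        calc k = ⌊t * n⌋₊ := rfl
          _ ≤ ⌊(n : ℝ)⌋₊ := Nat.floor_mono this
          _ = n := Nat.floor_natCast n
      have hmem : (n : ℝ)⁻¹ • a k ∈ convexHull ℝ A :=
        subset_convexHull ℝ A ⟨k, Set.mem_Iic.2 hkn, rfl⟩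
      refine le_trans (infDist_le_dist_of_mem hmem) ?_
      calc dist (t • μ) ((n : ℝ)⁻¹ • a k)
          ≤ dist (t • μ) (((k : ℝ) / n) • μ) + dist (((k : ℝ) / n) • μ) ((n : ℝ)⁻¹ • a k) :=
            dist_triangle _ _ _
        _ ≤ δ + δ := by
            refine add_le_add ?_ ?_
            · rw [dist_eq_norm, ← sub_smul, norm_smul, Real.norm_eq_abs]
              have h1 : t - (k : ℝ) / n ≤ 1 / n := by
                rw [sub_le_iff_le_add, ← add_div, le_div_iff₀ hnpos]
                linarith
              have h2 : 0 ≤ t - (k : ℝ) / n := by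
                rw [sub_nonneg, div_le_iff₀ hnpos]
                linarith
              rw [abs_of_nonneg h2]
              calc (t - (k : ℝ) / n) * ‖μ‖ ≤ 1 / n * ‖μ‖ :=
                    mul_le_mul_of_nonneg_right h1 (norm_nonneg _)
                _ = ‖μ‖ / n := by ring
                _ ≤ δ := hC3.le
            · rw [dist_comm]; exact hkey k hkN hkn
        _ = 2 * δ := by ring
  have hbound : hausdorffDist (convexHull ℝ A) seg ≤ 2 * δ :=
    hausdorffDist_le_of_infDist (by positivity) dir1 dir2
  rw [Real.dist_eq, sub_zero, abs_of_nonneg hausdorffDist_nonneg]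
  calc hausdorffDist (convexHull ℝ A) seg ≤ 2 * δ := hbound
    _ < ε := by rw [hδdef]; linarith

/-- **LLN for the convex hull of the random walk.** Almost surely, the rescaled convex
hull `n⁻¹ conv{S₀, S₁, …, S_n}` converges in Hausdorff distance to the segment
`[0, μ] = {tμ : t ∈ [0,1]}`. -/
theorem rw_convexHull_hausdorff_slln {d : ℕ} (hd : 1 ≤ d)
    {Ω : Type*} [MeasureSpace Ω] [IsProbabilityMeasure (ℙ : Measure Ω)]
    (ξ : ℕ → Ω → EuclideanSpace ℝ (Fin d))
    (hmeas : ∀ i, Measurable (ξ i))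
    (hindep : iIndepFun (fun i : ℕ => ξ (i + 1)) ℙ)
    (hident : ∀ i : ℕ, IdentDistrib (ξ (i + 1)) (ξ 1) ℙ ℙ)
    (hint : Integrable (ξ 1) ℙ)
    (μv : EuclideanSpace ℝ (Fin d)) (hμ : ∫ ω, ξ 1 ω ∂ℙ = μv)
    (S : ℕ → Ω → EuclideanSpace ℝ (Fin d))
    (hS : ∀ n ω, S n ω = ∑ i ∈ Finset.Icc 1 n, ξ i ω) :
    ∀ᵐ ω ∂ℙ, Tendsto
      (fun n : ℕ => hausdorffDist
        (convexHull ℝ ((fun k : ℕ => (n : ℝ)⁻¹ • S k ω) '' Iic n))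
        (segment ℝ (0 : EuclideanSpace ℝ (Fin d)) μv))
      atTop (nhds 0) := by
  have key := ProbabilityTheory.strong_law_ae (μ := (ℙ : Measure Ω))
    (fun i => ξ (i + 1)) hint
    (fun i j hij => hindep.indepFun hij)
    (fun i => (hident i).trans (hident 0).symm)
  have hint0 : (∫ x, ξ (0 + 1) x ∂(ℙ : Measure Ω)) = μv := by
    simpa using hμ
  filter_upwards [key] with ω hω
  have hsum : ∀ n : ℕ, ∑ i ∈ Finset.range n, ξ (i + 1) ω = S n ω := by
    intro n
    rw [hS]
    rw [show Finset.Icc 1 n = Finset.Ico 1 (n+1) from rfl, Finset.sum_Ico_eq_sum_range]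
    simp [add_comm]
  have ha : Tendsto (fun n : ℕ => (n : ℝ)⁻¹ • S n ω) atTop (𝓝 μv) := by
    rw [← hint0]
    exact hω.congr (fun n => by rw [hsum n])
  exact det_lemma (fun n => S n ω) (by simp [hS]) μv ha
end

section
/- For n ≥ 1 define Δ_n : [0,1] → ℝ^d by Δ_n(0) := 0 and Δ_n(t) := (1/t) ∫₀^t S_{⌊ns⌋} ds − G_{⌊nt⌋} for t ∈ (0,1]. Then for every α > 0, almost surely n^{−α} · sup_{t ∈ [0,1]} ‖Δ_n(t)‖ → 0 as n → ∞. -/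
open MeasureTheory ProbabilityTheory Filter Set

set_option maxHeartbeats 1000000



section aux
variable {E : Type*} [NormedAddCommGroup E] [NormedSpace ℝ E] [CompleteSpace E]

lemma com_floor_eq {n k : ℕ} (hn : 0 < n) {a b s : ℝ}
    (ha : (k : ℝ) ≤ n * a) (hb : (n : ℝ) * b ≤ k + 1) (hs : s ∈ Ioo a b) :
    ⌊(n : ℝ) * s⌋₊ = k := by
  have h1 : (k : ℝ) ≤ n * s := le_trans ha (by
    have : (0:ℝ) < n := by exact_mod_cast hn
    nlinarith [hs.1])
  have h2 : (n : ℝ) * s < k + 1 := lt_of_lt_of_le (by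
    have : (0:ℝ) < n := by exact_mod_cast hn
    nlinarith [hs.2]) hb
  rw [Nat.floor_eq_iff (le_trans (by positivity) h1)]
  exact ⟨by exact_mod_cast h1, by exact_mod_cast h2⟩

lemma com_piece_integrable (F : ℕ → E) {n k : ℕ} (hn : 0 < n) {a b : ℝ}
    (hab : a ≤ b) (ha : (k : ℝ) ≤ n * a) (hb : (n : ℝ) * b ≤ k + 1) :
    IntervalIntegrable (fun s => F ⌊(n : ℝ) * s⌋₊) volume a b := by
  rw [intervalIntegrable_iff_integrableOn_Ioc_of_le hab]
  have h1 : IntegrableOn (fun _ : ℝ => F k) (Ioo a b) volume :=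
    integrableOn_const measure_Ioo_lt_top.ne enorm_ne_top
  have h2 : IntegrableOn (fun s => F ⌊(n:ℝ)*s⌋₊) (Ioo a b) volume :=
    h1.congr_fun (fun s hs => by rw [com_floor_eq hn ha hb hs]) measurableSet_Ioo
  exact h2.congr_set_ae Ioo_ae_eq_Ioc.symm

lemma com_piece_integral (F : ℕ → E) {n k : ℕ} (hn : 0 < n) {a b : ℝ}
    (hab : a ≤ b) (ha : (k : ℝ) ≤ n * a) (hb : (n : ℝ) * b ≤ k + 1) :
    ∫ s in a..b, F ⌊(n : ℝ) * s⌋₊ = (b - a) • F k := by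
  rw [intervalIntegral.integral_of_le hab, integral_Ioc_eq_integral_Ioo,
    setIntegral_congr_fun measurableSet_Ioo
      (fun s hs => by rw [com_floor_eq hn ha hb hs] : EqOn _ (fun _ : ℝ => F k) _),
    setIntegral_const, measureReal_def, Real.volume_Ioo, ENNReal.toReal_ofReal (by linarith)]

lemma com_grid (n k : ℕ) (hn : 0 < n) :
    ((k : ℝ) ≤ n * ((k : ℝ) / n)) ∧ ((n : ℝ) * (((k : ℝ) + 1) / n) ≤ k + 1) := by
  have hn' : (0:ℝ) < n := by exact_mod_cast hn
  constructor <;> rw [mul_div_cancel₀ _ (ne_of_gt hn')]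

lemma com_grid_integrable (F : ℕ → E) {n : ℕ} (hn : 0 < n) (k : ℕ) :
    IntervalIntegrable (fun s => F ⌊(n : ℝ) * s⌋₊) volume ((k : ℝ)/n) (((k:ℝ)+1)/n) := by
  have hn' : (0:ℝ) < n := by exact_mod_cast hn
  exact com_piece_integrable F hn (by gcongr <;> linarith)
    (com_grid n k hn).1 (com_grid n k hn).2

lemma com_box_integral (F : ℕ → E) {n : ℕ} (hn : 0 < n) (m : ℕ) :
    ∫ s in (0:ℝ)..(((m:ℝ)+1)/n), F ⌊(n : ℝ) * s⌋₊
      = (n : ℝ)⁻¹ • ∑ i ∈ Finset.range (m+1), F i := by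
  have hn' : (0:ℝ) < n := by exact_mod_cast hn
  have key := intervalIntegral.sum_integral_adjacent_intervals
    (a := fun k : ℕ => (k : ℝ)/n) (μ := volume) (f := fun s => F ⌊(n : ℝ) * s⌋₊)
    (n := m+1) (fun k _ => by exact_mod_cast com_grid_integrable F hn k)
  simp only [Nat.cast_zero, zero_div] at key
  rw [show (((m:ℝ)+1)/n) = ((m+1 : ℕ) : ℝ)/n by push_cast; ring, ← key]
  rw [Finset.smul_sum]
  refine Finset.sum_congr rfl (fun k _ => ?_)
  have : ∫ s in ((k:ℝ)/n)..(((k:ℝ)+1)/n), F ⌊(n : ℝ) * s⌋₊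
      = (((k:ℝ)+1)/n - (k:ℝ)/n) • F k :=
    com_piece_integral F hn (by gcongr <;> linarith) (com_grid n k hn).1 (com_grid n k hn).2
  rw [show (((k:ℝ)+1) : ℝ)/n = ((k+1 : ℕ) : ℝ)/n by push_cast; ring] at this
  rw [this]
  congr 1
  push_cast
  field_simp
  ring

lemma com_integrable_zero (F : ℕ → E) {n : ℕ} (hn : 0 < n) (m : ℕ) :
    IntervalIntegrable (fun s => F ⌊(n : ℝ) * s⌋₊) volume 0 (((m:ℝ)+1)/n) := by
  have h := IntervalIntegrable.trans_iterate (a := fun k : ℕ => (k : ℝ)/n)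
    (n := m+1) (μ := volume) (f := fun s => F ⌊(n : ℝ) * s⌋₊)
    (fun k _ => by exact_mod_cast com_grid_integrable F hn k)
  simp only [Nat.cast_zero, zero_div] at h
  rw [show (((m:ℝ)+1)/n) = ((m+1 : ℕ) : ℝ)/n by push_cast; ring]
  exact h

end aux



section sums
variable {M : Type*} [AddCommMonoid M]

lemma com_sum_shift (g : ℕ → M) (m : ℕ) :
    ∑ i ∈ Finset.range m, g (i+1) = ∑ i ∈ Finset.Icc 1 m, g i := by
  induction m with
  | zero => simp
  | succ m ih => rw [Finset.sum_range_succ, ih, Finset.sum_Icc_succ_top (by omega)]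

lemma com_sum_range_eq_Icc (g : ℕ → M) (hg : g 0 = 0) (m : ℕ) :
    ∑ i ∈ Finset.range (m+1), g i = ∑ i ∈ Finset.Icc 1 m, g i := by
  rw [Finset.sum_range_succ', com_sum_shift, hg, add_zero]

end sums

section aux
variable {E : Type*} [NormedAddCommGroup E] [NormedSpace ℝ E] [CompleteSpace E]


lemma com_key (C : ℝ) (hC : 0 < C) (F : ℕ → E) (hF0 : F 0 = 0)
    (hF : ∀ k : ℕ, ‖F k‖ ≤ C * k)
    (G : ℕ → E) (hG0 : G 0 = 0)
    (hG : ∀ m : ℕ, 1 ≤ m → G m = (m : ℝ)⁻¹ • ∑ i ∈ Finset.Icc 1 m, F i)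
    {n : ℕ} (hn : 1 ≤ n) {t : ℝ} (ht0 : 0 ≤ t) (ht1 : t ≤ 1) :
    ‖t⁻¹ • (∫ s in (0:ℝ)..t, F ⌊(n:ℝ)*s⌋₊) - G ⌊(n:ℝ)*t⌋₊‖ ≤ 2*C := by
  have hn' : (0:ℝ) < n := by exact_mod_cast hn
  set m := ⌊(n:ℝ)*t⌋₊ with hm
  rcases Nat.eq_zero_or_pos m with hm0 | hmpos
  · have hnt : (n:ℝ)*t < 1 := Nat.floor_eq_zero.mp (hm ▸ hm0)
    have hint : ∫ s in (0:ℝ)..t, F ⌊(n:ℝ)*s⌋₊ = (t - 0) • F 0 :=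
      com_piece_integral F (by omega) (k := 0) ht0 (by simp) (by push_cast; linarith)
    rw [hm0, hG0, hint, hF0, smul_zero, smul_zero, sub_zero, norm_zero]
    linarith
  · have hmR : (1:ℝ) ≤ m := by exact_mod_cast hmpos
    have hmpos' : (0:ℝ) < m := by linarith
    have hu1 : (m:ℝ) ≤ n*t := Nat.floor_le (by positivity)
    have hu2 : (n:ℝ)*t < m+1 := Nat.lt_floor_add_one _
    have htpos : 0 < t := by nlinarith
    set b : ℝ := ((m:ℝ)+1)/n with hb
    have hbn : b * n = (m:ℝ)+1 := by rw [hb]; field_simp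
    have htb : t ≤ b := by rw [hb, le_div_iff₀ hn']; nlinarith
    have hIfull := com_box_integral F (by omega : 0 < n) m
    have hnb : (n:ℝ) * b ≤ (m:ℝ) + 1 := by nlinarith
    have hItail : ∫ s in t..b, F ⌊(n:ℝ)*s⌋₊ = (b - t) • F m :=
      com_piece_integral F (by omega) htb hu1 hnb
    have h0b := com_integrable_zero F (by omega : 0 < n) m
    have htbI : IntervalIntegrable (fun s => F ⌊(n:ℝ)*s⌋₊) volume t b :=
      com_piece_integrable F (by omega) htb hu1 hnb
    have h0t : IntervalIntegrable (fun s => F ⌊(n:ℝ)*s⌋₊) volume 0 t := by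
      refine h0b.mono_set ?_
      rw [uIcc_of_le ht0, uIcc_of_le (le_trans ht0 htb)]
      exact Icc_subset_Icc le_rfl htb
    have hsplit := intervalIntegral.integral_add_adjacent_intervals h0t htbI
    have hI : ∫ s in (0:ℝ)..t, F ⌊(n:ℝ)*s⌋₊
        = (n:ℝ)⁻¹ • (∑ i ∈ Finset.range (m+1), F i) - (b - t) • F m := by
      rw [← hIfull, ← hsplit, hItail]; abel
    set T : E := ∑ i ∈ Finset.Icc 1 m, F i with hT
    have hsum : ∑ i ∈ Finset.range (m+1), F i = T := com_sum_range_eq_Icc F hF0 m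
    have hGm : G m = (m:ℝ)⁻¹ • T := hG m hmpos
    have hexpr : t⁻¹ • (∫ s in (0:ℝ)..t, F ⌊(n:ℝ)*s⌋₊) - G m
        = (t⁻¹ * (n:ℝ)⁻¹ - (m:ℝ)⁻¹) • T - (t⁻¹ * (b - t)) • F m := by
      rw [hI, hsum, hGm, smul_sub, smul_smul, smul_smul, sub_smul]; abel
    rw [hexpr]
    have hTnorm : ‖T‖ ≤ C * m * m := by
      calc ‖T‖ ≤ ∑ i ∈ Finset.Icc 1 m, ‖F i‖ := norm_sum_le _ _
        _ ≤ ∑ _i ∈ Finset.Icc 1 m, C * m := by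
            refine Finset.sum_le_sum (fun i hi => le_trans (hF i) ?_)
            have : (i:ℝ) ≤ m := by exact_mod_cast (Finset.mem_Icc.mp hi).2
            nlinarith
        _ ≤ C * m * m := by
            rw [Finset.sum_const, Nat.card_Icc, nsmul_eq_mul]
            simp only [Nat.add_sub_cancel]
            nlinarith
    have hc1 : |t⁻¹ * (n:ℝ)⁻¹ - (m:ℝ)⁻¹| * ‖T‖ ≤ C := by
      have he : t⁻¹ * (n:ℝ)⁻¹ = ((n:ℝ)*t)⁻¹ := by rw [mul_inv]; ring
      have hupos : (0:ℝ) < n*t := by positivity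
      have hle : ((n:ℝ)*t)⁻¹ ≤ (m:ℝ)⁻¹ := by
        apply inv_anti₀ hmpos' hu1
      have habs : |t⁻¹*(n:ℝ)⁻¹ - (m:ℝ)⁻¹| ≤ ((m:ℝ)*m)⁻¹ := by
        rw [he, abs_sub_comm, abs_of_nonneg (by linarith)]
        rw [inv_sub_inv (ne_of_gt hmpos') (ne_of_gt hupos)]
        rw [show ((m:ℝ)*m)⁻¹ = 1/((m:ℝ)*m) by rw [one_div]]
        rw [div_le_div_iff₀ (by positivity) (by positivity)]
        nlinarith
      calc |t⁻¹*(n:ℝ)⁻¹ - (m:ℝ)⁻¹| * ‖T‖ ≤ ((m:ℝ)*m)⁻¹ * (C * m * m) :=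
            mul_le_mul habs hTnorm (norm_nonneg _) (by positivity)
        _ = C := by field_simp
    have hc2 : |t⁻¹ * (b - t)| * ‖F m‖ ≤ C := by
      have hbt0 : (0:ℝ) ≤ b - t := by linarith
      have h' : (b - t) * m ≤ t := by nlinarith [mul_nonneg (sub_nonneg.2 hu1) (by linarith : (0:ℝ) ≤ (m:ℝ)+1)]
      have hcoef : t⁻¹ * (b - t) ≤ (m:ℝ)⁻¹ := by
        rw [inv_mul_le_iff₀ htpos, ← div_eq_mul_inv, le_div_iff₀ hmpos']
        linarith
      calc |t⁻¹ * (b - t)| * ‖F m‖ = (t⁻¹ * (b - t)) * ‖F m‖ := by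
            rw [abs_of_nonneg (by positivity)]
        _ ≤ (m:ℝ)⁻¹ * (C * m) := mul_le_mul hcoef (hF m) (norm_nonneg _) (by positivity)
        _ = C := by field_simp
    calc ‖(t⁻¹ * (n:ℝ)⁻¹ - (m:ℝ)⁻¹) • T - (t⁻¹ * (b - t)) • F m‖
        ≤ ‖(t⁻¹ * (n:ℝ)⁻¹ - (m:ℝ)⁻¹) • T‖ + ‖(t⁻¹ * (b - t)) • F m‖ := norm_sub_le _ _
      _ = |t⁻¹ * (n:ℝ)⁻¹ - (m:ℝ)⁻¹| * ‖T‖ + |t⁻¹ * (b - t)| * ‖F m‖ := by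
            rw [norm_smul, norm_smul, Real.norm_eq_abs, Real.norm_eq_abs]
      _ ≤ C + C := add_le_add hc1 hc2
      _ = 2*C := by ring

end aux


/-- **The centre of mass is uniformly well-approximated by the integrated trajectory.**
With `Δ_n(t) = t⁻¹ ∫₀ᵗ S_{⌊ns⌋} ds − G_{⌊nt⌋}` for `t ∈ (0,1]` and `Δ_n(0) = 0`
(note `(0 : ℝ)⁻¹ = 0` in Lean, so the formula below also gives `Δ_n(0) = 0`),
for every `α > 0`, almost surely `n^{-α} sup_{t ∈ [0,1]} ‖Δ_n(t)‖ → 0`. -/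
theorem centre_of_mass_approx {d : ℕ} (hd : 1 ≤ d)
    {Ω : Type*} [MeasureSpace Ω] [IsProbabilityMeasure (ℙ : Measure Ω)]
    (ξ : ℕ → Ω → EuclideanSpace ℝ (Fin d))
    (hmeas : ∀ i, Measurable (ξ i))
    (hindep : iIndepFun (fun i : ℕ => ξ (i + 1)) ℙ)
    (hident : ∀ i : ℕ, IdentDistrib (ξ (i + 1)) (ξ 1) ℙ ℙ)
    (hint : Integrable (ξ 1) ℙ)
    (μv : EuclideanSpace ℝ (Fin d)) (hμ : ∫ ω, ξ 1 ω ∂ℙ = μv)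
    (S : ℕ → Ω → EuclideanSpace ℝ (Fin d))
    (hS : ∀ n ω, S n ω = ∑ i ∈ Finset.Icc 1 n, ξ i ω)
    (G : ℕ → Ω → EuclideanSpace ℝ (Fin d))
    (hG0 : ∀ ω, G 0 ω = 0)
    (hG : ∀ n : ℕ, 1 ≤ n → ∀ ω, G n ω = (n : ℝ)⁻¹ • ∑ i ∈ Finset.Icc 1 n, S i ω)
    (Δ : ℕ → Ω → ℝ → EuclideanSpace ℝ (Fin d))
    (hΔ : ∀ (n : ℕ) (ω : Ω) (t : ℝ),
      Δ n ω t = t⁻¹ • (∫ s in (0:ℝ)..t, S ⌊(n : ℝ) * s⌋₊ ω) - G ⌊(n : ℝ) * t⌋₊ ω)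
    (α : ℝ) (hα : 0 < α) :
    ∀ᵐ ω ∂ℙ, Tendsto
      (fun n : ℕ => (n : ℝ) ^ (-α) * ⨆ t ∈ Icc (0:ℝ) 1, ‖Δ n ω t‖)
      atTop (nhds 0) := by
  have hXint : Integrable (fun ω => ‖ξ (0+1) ω‖) ℙ := hint.norm
  have hXindep : Pairwise (Function.onFun (IndepFun · · ℙ) (fun i ω => ‖ξ (i+1) ω‖)) := by
    intro i j hij
    exact (hindep.indepFun hij).comp measurable_norm measurable_norm
  have hXident : ∀ i, IdentDistrib (fun ω => ‖ξ (i+1) ω‖) (fun ω => ‖ξ (0+1) ω‖) ℙ ℙ := by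
    intro i
    exact ((hident i).trans (hident 0).symm).comp measurable_norm
  have hslln := strong_law_ae_real (fun i ω => ‖ξ (i+1) ω‖) hXint hXindep hXident
  filter_upwards [hslln] with ω hω
  obtain ⟨C₀, hC₀⟩ := hω.bddAbove_range
  set C : ℝ := max C₀ 1 with hCdef
  have hCpos : (0:ℝ) < C := lt_of_lt_of_le one_pos (le_max_right _ _)
  have hFbound : ∀ k : ℕ, ‖S k ω‖ ≤ C * k := by
    intro k
    rcases Nat.eq_zero_or_pos k with rfl | hk
    · simp [hS 0 ω]
    · have h1 : ‖S k ω‖ ≤ ∑ i ∈ Finset.Icc 1 k, ‖ξ i ω‖ := by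
        rw [hS]; exact norm_sum_le _ _
      have h2 : ∑ i ∈ Finset.Icc 1 k, ‖ξ i ω‖ = ∑ i ∈ Finset.range k, ‖ξ (i+1) ω‖ :=
        (com_sum_shift (fun i => ‖ξ i ω‖) k).symm
      have h3 : (∑ i ∈ Finset.range k, ‖ξ (i+1) ω‖) / k ≤ C₀ := hC₀ ⟨k, rfl⟩
      have hk' : (0:ℝ) < k := by exact_mod_cast hk
      have hCC : C₀ ≤ C := le_max_left _ _
      calc ‖S k ω‖ ≤ ∑ i ∈ Finset.range k, ‖ξ (i+1) ω‖ := by rw [← h2]; exact h1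
        _ ≤ C₀ * k := by rw [div_le_iff₀ hk'] at h3; linarith
        _ ≤ C * k := by nlinarith
  have hbound : ∀ n : ℕ, 1 ≤ n → ∀ t ∈ Icc (0:ℝ) 1, ‖Δ n ω t‖ ≤ 2*C := by
    intro n hn t ht
    rw [hΔ]
    exact com_key C hCpos (fun k => S k ω) (by simp [hS 0 ω]) hFbound
      (fun m => G m ω) (hG0 ω) (fun m hm => hG m hm ω) hn ht.1 ht.2
  have hsupnn : ∀ n : ℕ, 0 ≤ ⨆ t ∈ Icc (0:ℝ) 1, ‖Δ n ω t‖ := fun n =>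
    Real.iSup_nonneg (fun t => Real.iSup_nonneg (fun _ => norm_nonneg _))
  have hsuple : ∀ n : ℕ, 1 ≤ n → (⨆ t ∈ Icc (0:ℝ) 1, ‖Δ n ω t‖) ≤ 2*C := fun n hn =>
    Real.iSup_le (fun t => Real.iSup_le (fun ht => hbound n hn t ht) (by linarith)) (by linarith)
  have hrpow : Tendsto (fun n : ℕ => (n:ℝ) ^ (-α) * (2*C)) atTop (nhds 0) := by
    have h := ((tendsto_rpow_neg_atTop hα).comp tendsto_natCast_atTop_atTop).mul_const (2*C)
    simpa using h
  refine squeeze_zero' ?_ ?_ hrpow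
  · filter_upwards with n
    exact mul_nonneg (Real.rpow_nonneg (Nat.cast_nonneg n) _) (hsupnn n)
  · filter_upwards [eventually_ge_atTop 1] with n hn
    exact mul_le_mul_of_nonneg_left (hsuple n hn) (Real.rpow_nonneg (Nat.cast_nonneg n) _)
end

section
/- Almost surely, sup_{t ∈ [0,1]} ‖ n^{-1} G_{⌊nt⌋} − μ t / 2 ‖ → 0 as n → ∞; i.e., the rescaled centre-of-mass trajectories (n^{-1} G_{⌊nt⌋})_{t ∈ [0,1]} converge uniformly (hence in the Skorokhod sense, the limit being continuous) to the deterministic trajectory t ↦ μ t / 2. -/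
open MeasureTheory ProbabilityTheory Filter Set

private lemma sum_Icc_cast (m : ℕ) :
    ∑ i ∈ Finset.Icc 1 m, (i : ℝ) = m * (m + 1) / 2 := by
  induction m with
  | zero => simp
  | succ k ih =>
    rw [Finset.sum_Icc_succ_top (by omega : 1 ≤ k + 1), ih]
    push_cast; ring

set_option maxHeartbeats 1000000 in
/-- Deterministic core: if `S n / n → μv`, the rescaled centre-of-mass
trajectories converge uniformly. -/
private lemma det_aux {E : Type*} [NormedAddCommGroup E] [NormedSpace ℝ E]
    (S : ℕ → E) (μv : E) (G : ℕ → E) (hG0 : G 0 = 0)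
    (hG : ∀ n : ℕ, 1 ≤ n → G n = (n : ℝ)⁻¹ • ∑ i ∈ Finset.Icc 1 n, S i)
    (h : Tendsto (fun n : ℕ => (n : ℝ)⁻¹ • S n) atTop (nhds μv)) :
    Tendsto (fun n : ℕ => ⨆ t ∈ Icc (0:ℝ) 1,
      ‖(n : ℝ)⁻¹ • G ⌊(n : ℝ) * t⌋₊ - (t / 2) • μv‖) atTop (nhds 0) := by
  rw [Metric.tendsto_atTop]
  intro ε hε
  set ε' : ℝ := ε / 4 with hε'
  have hε'pos : 0 < ε' := by positivity
  -- get K from the convergence hypothesis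
  obtain ⟨K, hK⟩ := (Metric.tendsto_atTop.1 h) ε' hε'pos
  set C : ℝ := ∑ i ∈ Finset.range K, ‖S i - (i : ℝ) • μv‖ with hC
  have hCnn : 0 ≤ C := Finset.sum_nonneg fun i _ => norm_nonneg _
  -- bound on error terms
  have key : ∀ m : ℕ, ‖∑ i ∈ Finset.Icc 1 m, (S i - (i : ℝ) • μv)‖
      ≤ C + ε' * m * m := by
    intro m
    calc ‖∑ i ∈ Finset.Icc 1 m, (S i - (i : ℝ) • μv)‖
        ≤ ∑ i ∈ Finset.Icc 1 m, ‖S i - (i : ℝ) • μv‖ := norm_sum_le _ _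
      _ ≤ ∑ i ∈ Finset.Icc 1 m,
          ((if i < K then ‖S i - (i : ℝ) • μv‖ else 0) + ε' * m) := by
          apply Finset.sum_le_sum
          intro i hi
          rcases lt_or_ge i K with hiK | hiK
          · simp only [if_pos hiK]
            have hm0 : (0:ℝ) ≤ m := Nat.cast_nonneg m
            nlinarith [norm_nonneg (S i - (i:ℝ) • μv), hε'pos.le]
          · simp only [if_neg (not_lt.2 hiK), zero_add]
            have hi1 : 1 ≤ i := (Finset.mem_Icc.1 hi).1
            have him : i ≤ m := (Finset.mem_Icc.1 hi).2
            have hipos : (0:ℝ) < i := by exact_mod_cast hi1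
            have := hK i hiK
            rw [dist_eq_norm] at this
            have hnorm : ‖S i - (i : ℝ) • μv‖ = (i : ℝ) * ‖(i:ℝ)⁻¹ • S i - μv‖ := by
              rw [← norm_smul_of_nonneg hipos.le, smul_sub, smul_smul,
                mul_inv_cancel₀ hipos.ne', one_smul]
            rw [hnorm]
            have him' : (i : ℝ) ≤ m := by exact_mod_cast him
            calc (i : ℝ) * ‖(i:ℝ)⁻¹ • S i - μv‖ ≤ (i : ℝ) * ε' := by
                  exact mul_le_mul_of_nonneg_left this.le hipos.le
              _ ≤ ε' * m := by nlinarith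
      _ = (∑ i ∈ Finset.Icc 1 m, if i < K then ‖S i - (i : ℝ) • μv‖ else 0)
            + m * (ε' * m) := by
          rw [Finset.sum_add_distrib, Finset.sum_const, Nat.card_Icc]
          simp [mul_comm]
      _ ≤ C + ε' * m * m := by
          have : (∑ i ∈ Finset.Icc 1 m, if i < K then ‖S i - (i : ℝ) • μv‖ else 0)
              ≤ C := by
            rw [← Finset.sum_filter]
            apply Finset.sum_le_sum_of_subset_of_nonneg
            · intro i hi
              simp only [Finset.mem_filter, Finset.mem_Icc] at hi
              exact Finset.mem_range.2 hi.2
            · intro i _ _; exact norm_nonneg _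
          nlinarith
  set D : ℝ := ‖μv‖ / 2 + C with hD
  have hDnn : 0 ≤ D := by positivity
  obtain ⟨N₀, hN₀⟩ := exists_nat_gt (D / ε')
  set N : ℕ := max N₀ 1 with hN
  refine ⟨N, fun n hn => ?_⟩
  have hn1 : 1 ≤ n := le_trans (le_max_right _ _) hn
  have hnpos : (0:ℝ) < n := by exact_mod_cast hn1
  -- bound D / n < ε'
  have hDn : D / n ≤ ε' := by
    have hN₀n : (N₀ : ℝ) ≤ n := by exact_mod_cast le_trans (le_max_left _ _) hn
    have : D / ε' < (n : ℝ) := lt_of_lt_of_le hN₀ hN₀n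
    rw [div_le_iff₀ hnpos]
    calc D = (D / ε') * ε' := by field_simp
      _ ≤ n * ε' := by nlinarith
      _ = ε' * n := mul_comm _ _
  -- pointwise bound for every t ∈ [0,1]
  have ptbd : ∀ t ∈ Icc (0:ℝ) 1,
      ‖(n : ℝ)⁻¹ • G ⌊(n : ℝ) * t⌋₊ - (t / 2) • μv‖ ≤ D / n + ε' := by
    intro t ht
    obtain ⟨ht0, ht1⟩ := ht
    set m : ℕ := ⌊(n : ℝ) * t⌋₊ with hm
    have hnt0 : 0 ≤ (n : ℝ) * t := by positivity
    have hmle : (m : ℝ) ≤ (n : ℝ) * t := Nat.floor_le hnt0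
    have hmlt : (n : ℝ) * t < m + 1 := Nat.lt_floor_add_one _
    rcases Nat.eq_zero_or_pos m with hm0 | hmpos
    · rw [hm0, hG0, smul_zero, zero_sub, norm_neg, norm_smul]
      have htlt : (n : ℝ) * t < 1 := by
        rw [hm0] at hmlt; simpa using hmlt
      have ht' : t < 1 / n := by
        rw [lt_div_iff₀ hnpos]; linarith [mul_comm (n:ℝ) t ▸ htlt]
      have : |t / 2| = t / 2 := abs_of_nonneg (by linarith)
      rw [Real.norm_eq_abs, this]
      have : t / 2 * ‖μv‖ ≤ (1 / n) / 2 * ‖μv‖ := by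
        apply mul_le_mul_of_nonneg_right _ (norm_nonneg _)
        linarith
      calc t / 2 * ‖μv‖ ≤ (1 / n) / 2 * ‖μv‖ := this
        _ = (‖μv‖ / 2) / n := by ring
        _ ≤ D / n + ε' := by
            have h1 : (‖μv‖/2) / n ≤ D / n := by
              gcongr
              rw [hD]; linarith
            linarith
    · -- m ≥ 1
      have hm1 : 1 ≤ m := hmpos
      have hmR : (0:ℝ) < m := by exact_mod_cast hmpos
      have hmn : m ≤ n := by
        have : (n : ℝ) * t ≤ n := by nlinarith
        calc m = ⌊(n:ℝ) * t⌋₊ := hm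
          _ ≤ ⌊(n:ℝ)⌋₊ := Nat.floor_le_floor (by nlinarith)
          _ = n := Nat.floor_natCast n
      have hmnR : (m : ℝ) ≤ n := by exact_mod_cast hmn
      rw [hG m hm1]
      -- decompose the sum
      have hsum : ∑ i ∈ Finset.Icc 1 m, S i
          = (m * (m+1) / 2 : ℝ) • μv + ∑ i ∈ Finset.Icc 1 m, (S i - (i:ℝ) • μv) := by
        rw [Finset.sum_sub_distrib, ← Finset.sum_smul, sum_Icc_cast]
        abel
      set E' : E := ∑ i ∈ Finset.Icc 1 m, (S i - (i:ℝ) • μv) with hE'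
      have expand : (n : ℝ)⁻¹ • ((m:ℝ)⁻¹ • ∑ i ∈ Finset.Icc 1 m, S i) - (t/2) • μv
          = ((m+1) / (2*n) - t/2) • μv + ((n:ℝ)⁻¹ * (m:ℝ)⁻¹) • E' := by
        have hm0 : (m:ℝ) ≠ 0 := hmR.ne'
        have hn0 : (n:ℝ) ≠ 0 := hnpos.ne'
        rw [hsum]
        match_scalars
        · field_simp
        · field_simp
      rw [expand]
      have hrw : ((m:ℝ)+1) / (2*n) - t/2 = ((m:ℝ) + 1 - n*t) / (2*n) := by
        field_simp
      have bd1 : |((m:ℝ)+1) / (2*n) - t/2| ≤ 1 / (2*n) := by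
        rw [hrw, abs_le]
        constructor
        · have hXnn : (0:ℝ) ≤ ((m:ℝ) + 1 - n*t) / (2*n) :=
            div_nonneg (by linarith) (by positivity)
          have : (0:ℝ) < 1/(2*n) := by positivity
          linarith
        · gcongr
          linarith
      have hE'bd : ‖E'‖ ≤ C + ε' * m * m := key m
      have hnormA : ‖(((m:ℝ)+1)/(2*n) - t/2) • μv‖ ≤ (1/(2*n)) * ‖μv‖ := by
        rw [norm_smul]
        exact mul_le_mul_of_nonneg_right bd1 (norm_nonneg _)
      have hnormB : ‖((n:ℝ)⁻¹*(m:ℝ)⁻¹) • E'‖ ≤ (n:ℝ)⁻¹*(m:ℝ)⁻¹ * (C + ε'*m*m) := by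
        rw [norm_smul, Real.norm_eq_abs, abs_of_nonneg (by positivity)]
        exact mul_le_mul_of_nonneg_left hE'bd (by positivity)
      have h3 : (n:ℝ)⁻¹*(m:ℝ)⁻¹ * (C + ε'*m*m) ≤ C/n + ε' := by
        have heq : (n:ℝ)⁻¹*(m:ℝ)⁻¹ * (C + ε'*m*m) = C/(n*m) + ε'*m/n := by
          field_simp
        rw [heq]
        have h4 : C/((n:ℝ)*m) ≤ C/n := by
          have h1m : (1:ℝ) ≤ m := by exact_mod_cast hm1
          gcongr
          nlinarith
        have h5 : ε'*(m:ℝ)/n ≤ ε' := by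
          rw [div_le_iff₀ hnpos]
          nlinarith
        linarith
      have hfin : 1/(2*(n:ℝ))*‖μv‖ + (C/n + ε') = D/n + ε' := by
        rw [hD]; field_simp; ring
      calc ‖(((m:ℝ)+1)/(2*n) - t/2) • μv + ((n:ℝ)⁻¹*(m:ℝ)⁻¹) • E'‖
          ≤ ‖(((m:ℝ)+1)/(2*n) - t/2) • μv‖ + ‖((n:ℝ)⁻¹*(m:ℝ)⁻¹) • E'‖ :=
            norm_add_le _ _
        _ ≤ 1/(2*(n:ℝ))*‖μv‖ + (C/n + ε') := by linarith
        _ = D/n + ε' := hfin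
  -- assemble the sup bound
  have hub : (⨆ t ∈ Icc (0:ℝ) 1,
      ‖(n : ℝ)⁻¹ • G ⌊(n : ℝ) * t⌋₊ - (t / 2) • μv‖) ≤ D / n + ε' := by
    refine Real.iSup_le (fun t => Real.iSup_le (fun ht => ptbd t ht) ?_) ?_ <;> positivity
  have hnn : 0 ≤ ⨆ t ∈ Icc (0:ℝ) 1,
      ‖(n : ℝ)⁻¹ • G ⌊(n : ℝ) * t⌋₊ - (t / 2) • μv‖ :=
    Real.iSup_nonneg fun t => Real.iSup_nonneg fun _ => norm_nonneg _
  rw [Real.dist_0_eq_abs, abs_of_nonneg hnn]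
  have : ε' + ε' < ε := by rw [hε']; linarith
  linarith

/-- **Functional LLN for the centre of mass.** Almost surely, the rescaled
centre-of-mass trajectories `t ↦ n⁻¹ G_{⌊nt⌋}` converge uniformly on `[0,1]`
to the deterministic trajectory `t ↦ (t/2) μ`. -/
theorem centre_of_mass_functional_slln {d : ℕ} (hd : 1 ≤ d)
    {Ω : Type*} [MeasureSpace Ω] [IsProbabilityMeasure (ℙ : Measure Ω)]
    (ξ : ℕ → Ω → EuclideanSpace ℝ (Fin d))
    (hmeas : ∀ i, Measurable (ξ i))
    (hindep : iIndepFun (m := fun _ => inferInstance) (fun i : ℕ => ξ (i + 1)) ℙ)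
    (hident : ∀ i : ℕ, IdentDistrib (ξ (i + 1)) (ξ 1) ℙ ℙ)
    (hint : Integrable (ξ 1) ℙ)
    (μv : EuclideanSpace ℝ (Fin d)) (hμ : ∫ ω, ξ 1 ω ∂ℙ = μv)
    (S : ℕ → Ω → EuclideanSpace ℝ (Fin d))
    (hS : ∀ n ω, S n ω = ∑ i ∈ Finset.Icc 1 n, ξ i ω)
    (G : ℕ → Ω → EuclideanSpace ℝ (Fin d))
    (hG0 : ∀ ω, G 0 ω = 0)
    (hG : ∀ n : ℕ, 1 ≤ n → ∀ ω, G n ω = (n : ℝ)⁻¹ • ∑ i ∈ Finset.Icc 1 n, S i ω) :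
    ∀ᵐ ω ∂ℙ, Tendsto
      (fun n : ℕ => ⨆ t ∈ Icc (0:ℝ) 1,
        ‖(n : ℝ)⁻¹ • G ⌊(n : ℝ) * t⌋₊ ω - (t / 2) • μv‖)
      atTop (nhds 0) := by
  have slln := ProbabilityTheory.strong_law_ae (μ := (ℙ : Measure Ω))
    (fun i => ξ (i + 1)) (by simpa using hint)
    (fun i j hij => hindep.indepFun hij)
    (fun i => (hident i).trans (hident 0).symm)
  have hint0 : (ℙ : Measure Ω)[fun ω => ξ (0+1) ω] = μv := by simpa using hμ
  filter_upwards [slln] with ω hω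
  have hω' : Tendsto (fun n : ℕ => (n : ℝ)⁻¹ • S n ω) atTop (nhds μv) := by
    have : ∀ n : ℕ, S n ω = ∑ i ∈ Finset.range n, ξ (i + 1) ω := by
      intro n
      rw [hS, ← Finset.Ico_add_one_right_eq_Icc, Finset.sum_Ico_eq_sum_range]
      simp [Nat.add_comm]
    simp only [this]
    rw [← hint0] at *
    exact hω
  exact det_aux (fun n => S n ω) μv (fun n => G n ω) (hG0 ω)
    (fun n hn => hG n hn ω) hω'
end
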